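/- For a q-ary alphabet with q ≥ 2, β in [0, (q-1)/q), and any positive integer n, the Hamming ball of radius βn centered at any string in A_q^n has size at most q^{H_q(β)n}, where H_q(x) = -x log_q(x) - (1-x) log_q(1-x) + x log_q(q-1). -/

import Mathlib

open scoped BigOperators

/-- One duplication-with-transposition step: `x = a·b·c·d → y = a·b·c·b·d`, `b` non-empty. -/
def DupStep {q : ℕ} (x y : List (Fin q)) : Prop :=
  ∃ a b c d : List (Fin q), b ≠ [] ∧ x = a ++ b ++ c ++ d ∧ y = a ++ b ++ c ++ b ++ d

/-- `DupPath m x y` : `y` is obtained from `x` by exactly `m` duplication steps. -/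
def DupPath {q : ℕ} : ℕ → List (Fin q) → List (Fin q) → Prop
  | 0, x, y => x = y
  | n + 1, x, y => ∃ z, DupStep x z ∧ DupPath n z y

/-- Hamming distance between two lists (of equal length in intended use). -/
def listHammingDist {q : ℕ} (b b' : List (Fin q)) : ℕ :=
  ((b.zip b').filter fun p => decide (p.1 ≠ p.2)).length

/-- One β-approximate duplication-with-transposition step. -/
def ApproxStep {q : ℕ} (β : ℝ) (x y : List (Fin q)) : Prop :=
  ∃ a b c bh d : List (Fin q), b ≠ [] ∧ bh.length = b.length ∧
    (listHammingDist b bh : ℝ) ≤ β * b.length ∧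
    x = a ++ b ++ c ++ d ∧ y = a ++ b ++ c ++ bh ++ d

/-- `ApproxPath β m x y` : `y` obtained from `x` by exactly `m` β-approximate duplications. -/
def ApproxPath {q : ℕ} (β : ℝ) : ℕ → List (Fin q) → List (Fin q) → Prop
  | 0, x, y => x = y
  | n + 1, x, y => ∃ z, ApproxStep β x z ∧ ApproxPath β n z y

/-- The root of a string: the subsequence of first occurrences of symbols. -/
def firstOccs {q : ℕ} (l : List (Fin q)) : List (Fin q) :=
  l.foldl (fun acc a => if a ∈ acc then acc else acc ++ [a]) []

/-- for `0 ≤ β < (q-1)/q` the Hamming ball of radius `βn` in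
`A_q^n` has size at most `q^{H_q(β)n}`. -/
theorem stmt14 (q n : ℕ) (hq : 2 ≤ q) (hn : 1 ≤ n) (β : ℝ)
    (hβ0 : 0 ≤ β) (hβ1 : β < ((q : ℝ) - 1) / q) (center : Fin n → Fin q) :
    (Nat.card {y : Fin n → Fin q // (hammingDist y center : ℝ) ≤ β * n} : ℝ)
      ≤ (q : ℝ) ^ ((-β * Real.logb q β - (1 - β) * Real.logb q (1 - β)
          + β * Real.logb q ((q : ℝ) - 1)) * n) := by
  classical
  have hq2 : (2:ℝ) ≤ (q:ℝ) := by exact_mod_cast hq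
  have hq0 : (0:ℝ) < q := by linarith
  have hq1 : (1:ℝ) < q := by linarith
  have hqm1 : (0:ℝ) < (q:ℝ) - 1 := by linarith
  have hβlt1 : β < 1 := lt_of_lt_of_le hβ1 (by rw [div_le_one hq0]; linarith)
  have h1β : 0 < 1 - β := by linarith
  rcases eq_or_lt_of_le hβ0 with h0 | hβpos
  · -- β = 0
    subst h0
    have hsub : ∀ y : {y : Fin n → Fin q // (hammingDist y center : ℝ) ≤ (0:ℝ) * n},
        y.1 = center := by
      intro y
      have h : (hammingDist y.1 center : ℝ) ≤ 0 := by simpa using y.2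
      have : hammingDist y.1 center = 0 := by exact_mod_cast le_antisymm h (by positivity)
      exact hammingDist_eq_zero.mp this
    have : Subsingleton {y : Fin n → Fin q // (hammingDist y center : ℝ) ≤ (0:ℝ) * n} :=
      ⟨fun a b => Subtype.ext ((hsub a).trans (hsub b).symm)⟩
    have hc : Nat.card {y : Fin n → Fin q // (hammingDist y center : ℝ) ≤ (0:ℝ) * n} ≤ 1 := by
      rw [Nat.card_eq_fintype_card]
      exact Fintype.card_le_one_iff_subsingleton.mpr this
    calc (Nat.card {y : Fin n → Fin q // (hammingDist y center : ℝ) ≤ (0:ℝ) * n} : ℝ) ≤ 1 := by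
          exact_mod_cast hc
      _ ≤ _ := by
          rw [show (-(0:ℝ) * Real.logb q 0 - (1 - 0) * Real.logb q (1 - 0)
              + 0 * Real.logb q ((q : ℝ) - 1)) * n = 0 by simp [Real.logb_one]]
          rw [Real.rpow_zero]
  · -- main case
    set w : Fin n → Fin q → ℝ := fun i v => if v = center i then 1 - β else β / ((q:ℝ) - 1)
      with hwdef
    have hw_nonneg : ∀ i v, 0 ≤ w i v := by
      intro i v; dsimp [w]; split
      · linarith
      · positivity
    have hsumrow : ∀ i : Fin n, ∑ v : Fin q, w i v = 1 := by
      intro i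
      have h1 : ∑ v : Fin q, w i v
          = ∑ v : Fin q, (β/((q:ℝ)-1) + if v = center i then (1-β) - β/((q:ℝ)-1) else 0) := by
        apply Finset.sum_congr rfl
        intro v _; dsimp [w]; split <;> ring
      rw [h1, Finset.sum_add_distrib, Finset.sum_const,
        Finset.sum_ite_eq' Finset.univ (center i) (fun _ => (1-β) - β/((q:ℝ)-1))]
      simp only [Finset.card_univ, Fintype.card_fin, Finset.mem_univ, if_true, nsmul_eq_mul]
      field_simp
      ring
    have hsum1 : ∑ y : Fin n → Fin q, ∏ i, w i (y i) = 1 := by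
      rw [← Fintype.prod_sum]
      simp [hsumrow]
    have hP : ∀ y : Fin n → Fin q, ∏ i, w i (y i)
        = (1-β) ^ (n - hammingDist y center) * (β/((q:ℝ)-1)) ^ (hammingDist y center) := by
      intro y
      have hd : hammingDist y center = (Finset.univ.filter fun i => ¬ (y i = center i)).card := by
        simp [hammingDist, Ne]
      have hcardsplit : (Finset.univ.filter fun i => y i = center i).card
          + (Finset.univ.filter fun i => ¬ (y i = center i)).card = n := by
        rw [Finset.card_filter_add_card_filter_not]
        simp
      dsimp [w]
      rw [Finset.prod_ite, Finset.prod_const, Finset.prod_const, hd]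
      congr 2
      omega
    set r : ℝ := β / (((q:ℝ)-1) * (1-β)) with hrdef
    have hr0 : 0 < r := div_pos hβpos (mul_pos hqm1 h1β)
    have hr1 : r < 1 := by
      rw [hrdef, div_lt_one (mul_pos hqm1 h1β)]
      have := (lt_div_iff₀ hq0).mp hβ1
      nlinarith
    set m : ℝ := (1-β)^n * r ^ (β * n) with hmdef
    have hm0 : 0 < m := mul_pos (pow_pos h1β n) (Real.rpow_pos_of_pos hr0 _)
    have hlow : ∀ y : Fin n → Fin q, (hammingDist y center : ℝ) ≤ β * n
        → m ≤ ∏ i, w i (y i) := by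
      intro y hy
      rw [hP y]
      set d := hammingDist y center with hddef
      have hdn : d ≤ n := by
        have := hammingDist_le_card_fintype (x := y) (y := center)
        simpa using this
      have hsplit : (1-β) ^ (n - d) * (β/((q:ℝ)-1)) ^ d = (1-β)^n * r ^ d := by
        have hb : (β/((q:ℝ)-1)) = (1-β) * r := by
          rw [hrdef]; field_simp
        rw [hb, mul_pow, ← mul_assoc, ← pow_add]
        congr 2
        omega
      rw [hsplit, hmdef]
      apply mul_le_mul_of_nonneg_left _ (pow_nonneg h1β.le n)
      calc r ^ (β*n) ≤ r ^ ((d:ℝ)) := Real.rpow_le_rpow_of_exponent_ge hr0 hr1.le hy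
        _ = r ^ d := Real.rpow_natCast r d
    set S : Finset (Fin n → Fin q) :=
      Finset.univ.filter (fun y => (hammingDist y center : ℝ) ≤ β * n) with hSdef
    have hcard : Nat.card {y : Fin n → Fin q // (hammingDist y center : ℝ) ≤ β * n}
        = S.card := by
      rw [Nat.card_eq_fintype_card, Fintype.card_subtype]
    have key : (S.card : ℝ) * m ≤ 1 := by
      calc (S.card : ℝ) * m = ∑ _y ∈ S, m := by rw [Finset.sum_const, nsmul_eq_mul]
        _ ≤ ∑ y ∈ S, ∏ i, w i (y i) :=
            Finset.sum_le_sum (fun y hy => hlow y (by simpa [hSdef] using hy))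
        _ ≤ ∑ y : Fin n → Fin q, ∏ i, w i (y i) :=
            Finset.sum_le_sum_of_subset_of_nonneg (Finset.subset_univ S)
              (fun y _ _ => Finset.prod_nonneg fun i _ => hw_nonneg i (y i))
        _ = 1 := hsum1
    have hexp : (q : ℝ) ^ ((-β * Real.logb q β - (1 - β) * Real.logb q (1 - β)
          + β * Real.logb q ((q : ℝ) - 1)) * n) = m⁻¹ := by
      have hq1' : (q:ℝ) ≠ 1 := hq1.ne'
      have h1 : (1-β)^n = (q:ℝ) ^ (Real.logb q (1-β) * n) := by
        conv_lhs => rw [← Real.rpow_natCast (1-β) n, ← Real.rpow_logb hq0 hq1' h1β]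
        rw [← Real.rpow_mul hq0.le]
      have h2 : r ^ (β * n) = (q:ℝ) ^ (Real.logb q r * (β * n)) := by
        conv_lhs => rw [← Real.rpow_logb hq0 hq1' hr0]
        rw [← Real.rpow_mul hq0.le]
      have hlr : Real.logb q r = Real.logb q β - (Real.logb q ((q:ℝ)-1) + Real.logb q (1-β)) := by
        rw [hrdef, Real.logb_div hβpos.ne' (mul_ne_zero hqm1.ne' h1β.ne'),
          Real.logb_mul hqm1.ne' h1β.ne']
      rw [hmdef, h1, h2, ← Real.rpow_add hq0, ← Real.rpow_neg hq0.le]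
      congr 1
      rw [hlr]
      ring
    rw [hcard, hexp, ← one_div]
    exact (le_div_iff₀ hm0).mpr key
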